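/- Let a, b be nonnegative integers. Then there exist a natural number N and rational numbers μ₀, μ₁, …, μ_N such that for every P ∈ S^aD^b, the projection π_{a,b}(P) equals Σ_{j=0}^N μⱼ · δ^j(Δ^j(P)); here π_{a,b} : S^aD^b → S^aD^b is the linear projection with image V(a,b) = ker Δ ∩ S^aD^b and kernel δ(S^{a-1}D^{b-1}). -/

import Mathlib

open MvPolynomial

noncomputable section

/-- The polynomial ring `R = ℂ[e₁,e₂,e₃,x₁,x₂,x₃]`:
variables `0,1,2` are `e₁,e₂,e₃` and variables `3,4,5` are `x₁,x₂,x₃`. -/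
abbrev R6 : Type := MvPolynomial (Fin 6) ℂ

/-- the variable `eᵢ` -/
def ev (i : Fin 3) : Fin 6 := ⟨i.val, by omega⟩

/-- the variable `xᵢ` -/
def xv (i : Fin 3) : Fin 6 := ⟨i.val + 3, by omega⟩

/-- `Δ = Σᵢ (∂/∂eᵢ)∘(∂/∂xᵢ)` -/
def Δ : Module.End ℂ R6 :=
  ∑ i : Fin 3, (pderiv (ev i)).toLinearMap ∘ₗ (pderiv (xv i)).toLinearMap

/-- `δ` = multiplication by `e₁x₁+e₂x₂+e₃x₃` -/
def δ : Module.End ℂ R6 :=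
  LinearMap.mulLeft ℂ (∑ i : Fin 3, X (ev i) * X (xv i))

/-- weight recording the total degree in the `e`-variables -/
def wE : Fin 6 → ℕ := fun i => if i.val < 3 then 1 else 0

/-- weight recording the total degree in the `x`-variables -/
def wX : Fin 6 → ℕ := fun i => if i.val < 3 then 0 else 1

/-- `S^aD^b`: polynomials homogeneous of degree `a` in `e₁,e₂,e₃` and of degree `b` in
`x₁,x₂,x₃`. -/
def SD (a b : ℕ) : Submodule ℂ R6 :=
  weightedHomogeneousSubmodule ℂ wE a ⊓ weightedHomogeneousSubmodule ℂ wX b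

/-- `S^{e-1}D^{f-1}`, interpreted as `0` when `e = 0` or `f = 0`. -/
def SDsub (e f : ℕ) : Submodule ℂ R6 :=
  if e = 0 ∨ f = 0 then ⊥ else SD (e - 1) (f - 1)

/-- `V(a,b) = ker Δ ∩ S^aD^b` -/
def V (a b : ℕ) : Submodule ℂ R6 := LinearMap.ker Δ ⊓ SD a b



lemma X_mul_mono (i : Fin 6) (m : Fin 6 →₀ ℕ) (a : ℂ) :
    (X i : R6) * monomial m a = monomial (m + Finsupp.single i 1) a := by
  rw [X, monomial_mul, one_mul, add_comm]

lemma X_mul_pderiv_mono (i : Fin 6) (m : Fin 6 →₀ ℕ) (a : ℂ) :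
    (X i : R6) * pderiv i (monomial m a) = (m i) • monomial m a := by
  rw [pderiv_monomial]
  rcases Nat.eq_zero_or_pos (m i) with h0 | h0
  · simp [h0]
  · rw [X_mul_mono]
    have : m - Finsupp.single i 1 + Finsupp.single i 1 = m := by
      ext j
      rcases eq_or_ne j i with rfl | hne
      · simp [Finsupp.single_apply]; omega
      · simp [Finsupp.single_apply, hne.symm, Finsupp.single_eq_of_ne (Ne.symm hne)]
    rw [this, smul_monomial]
    congr 1
    push_cast
    ring

lemma weight_eq_sum (w : Fin 6 → ℕ) (m : Fin 6 →₀ ℕ) :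
    Finsupp.weight w m = ∑ i : Fin 6, m i * w i := by
  rw [Finsupp.weight_apply, Finsupp.sum_fintype]
  · simp [smul_eq_mul]
  · intro i; simp

lemma euler_mono (w : Fin 6 → ℕ) (m : Fin 6 →₀ ℕ) (a : ℂ) :
    ∑ i : Fin 6, w i • ((X i : R6) * pderiv i (monomial m a)) =
      (Finsupp.weight w m) • (monomial m a : R6) := by
  simp only [X_mul_pderiv_mono, smul_smul, weight_eq_sum, Finset.sum_smul]
  exact Finset.sum_congr rfl fun i _ => by rw [mul_comm (m i) (w i)]

lemma euler (w : Fin 6 → ℕ) (n : ℕ) (P : R6) (hP : P.IsWeightedHomogeneous w n) :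
    ∑ i : Fin 6, w i • ((X i : R6) * pderiv i P) = n • P := by
  conv_lhs => rw [P.as_sum]
  conv_rhs => rw [P.as_sum]
  simp only [map_sum, Finset.mul_sum, Finset.smul_sum]
  rw [Finset.sum_comm]
  refine Finset.sum_congr rfl fun m hm => ?_
  rw [euler_mono, hP (mem_support_iff.mp hm)]


lemma pderiv_homog (w : Fin 6 → ℕ) (n : ℕ) (P : R6) (i : Fin 6)
    (hP : P.IsWeightedHomogeneous w n) :
    (pderiv i P).IsWeightedHomogeneous w (n - w i) := by
  have : pderiv i P ∈ weightedHomogeneousSubmodule ℂ w (n - w i) := by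
    rw [show pderiv i P = pderiv i (∑ v ∈ P.support, monomial v (coeff v P)) by rw [← P.as_sum]]
    rw [map_sum]
    apply Submodule.sum_mem
    intro m hm
    rw [pderiv_monomial, mem_weightedHomogeneousSubmodule]
    rcases Nat.eq_zero_or_pos (m i) with h0 | h0
    · rw [h0]; norm_num
      exact (weightedHomogeneousSubmodule ℂ w (n - w i)).zero_mem
    · apply isWeightedHomogeneous_monomial
      have hsum : m - Finsupp.single i 1 + Finsupp.single i 1 = m := by
        ext j
        rcases eq_or_ne j i with rfl | hne
        · simp [Finsupp.single_apply]; omega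
        · simp [Finsupp.single_apply, Finsupp.single_eq_of_ne' (Ne.symm hne)]
      have hw : Finsupp.weight w m = Finsupp.weight w (m - Finsupp.single i 1) + w i := by
        conv_lhs => rw [← hsum]
        rw [map_add]
        simp [Finsupp.weight_apply, Finsupp.sum_single_index]
      have := hP (mem_support_iff.mp hm)
      omega
  exact this

lemma pderiv_eq_zero_of_lt (w : Fin 6 → ℕ) (n : ℕ) (P : R6) (i : Fin 6)
    (hP : P.IsWeightedHomogeneous w n) (hlt : n < w i) :
    pderiv i P = 0 := by
  conv_lhs => rw [P.as_sum]
  rw [map_sum]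
  apply Finset.sum_eq_zero
  intro m hm
  rw [pderiv_monomial]
  have hm0 : m i = 0 := by
    by_contra h
    have hw := hP (mem_support_iff.mp hm)
    rw [weight_eq_sum] at hw
    have h2 : m i * w i ≤ ∑ j : Fin 6, m j * w j :=
      Finset.single_le_sum (f := fun j => m j * w j) (fun j _ => Nat.zero_le _) (Finset.mem_univ i)
    rw [hw] at h2
    nlinarith [Nat.one_le_iff_ne_zero.mpr h]
  simp [hm0]


lemma wE_ev (i : Fin 3) : wE (ev i) = 1 := by simp [wE, ev, i.isLt]
lemma wE_xv (i : Fin 3) : wE (xv i) = 0 := by simp [wX, wE, xv]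
lemma wX_ev (i : Fin 3) : wX (ev i) = 0 := by simp [wX, ev, i.isLt]
lemma wX_xv (i : Fin 3) : wX (xv i) = 1 := by simp [wX, xv]

lemma mem_SD (c d : ℕ) (P : R6) :
    P ∈ SD c d ↔ IsWeightedHomogeneous wE P c ∧ IsWeightedHomogeneous wX P d := Iff.rfl

lemma Δ_apply (P : R6) : Δ P = ∑ i : Fin 3, pderiv (ev i) (pderiv (xv i) P) := by
  simp [Δ]

lemma δ_apply (Q : R6) : δ Q = (∑ i : Fin 3, (X (ev i) : R6) * X (xv i)) * Q := by
  simp [δ, LinearMap.mulLeft_apply]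

lemma Δ_mem {c d : ℕ} {P : R6} (hP : P ∈ SD c d) : Δ P ∈ SD (c - 1) (d - 1) := by
  rw [Δ_apply]
  apply Submodule.sum_mem
  intro i _
  obtain ⟨hE, hX⟩ := hP
  constructor
  · have h1 := pderiv_homog wE c P (xv i) hE
    rw [wE_xv, Nat.sub_zero] at h1
    have h2 := pderiv_homog wE c _ (ev i) h1
    rwa [wE_ev] at h2
  · have h1 := pderiv_homog wX d P (xv i) hX
    rw [wX_xv] at h1
    have h2 := pderiv_homog wX (d - 1) _ (ev i) h1
    rwa [wX_ev, Nat.sub_zero] at h2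

lemma Δ_zero {c d : ℕ} {P : R6} (hP : P ∈ SD c d) (h : c = 0 ∨ d = 0) : Δ P = 0 := by
  rw [Δ_apply]
  apply Finset.sum_eq_zero
  intro i _
  obtain ⟨hE, hX⟩ := hP
  rcases h with rfl | rfl
  · have h1 := pderiv_homog wE 0 P (xv i) hE
    rw [wE_xv, Nat.sub_zero] at h1
    rw [pderiv_eq_zero_of_lt wE 0 _ (ev i) h1 (by rw [wE_ev]; omega)]
  · rw [pderiv_eq_zero_of_lt wX 0 P (xv i) hX (by rw [wX_xv]; omega), map_zero]

lemma s_mem : (∑ i : Fin 3, (X (ev i) : R6) * X (xv i)) ∈ SD 1 1 := by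
  apply Submodule.sum_mem
  intro i _
  constructor
  · have := (isWeightedHomogeneous_X ℂ wE (ev i)).mul (isWeightedHomogeneous_X ℂ wE (xv i))
    rwa [wE_ev, wE_xv] at this
  · have := (isWeightedHomogeneous_X ℂ wX (ev i)).mul (isWeightedHomogeneous_X ℂ wX (xv i))
    rwa [wX_ev, wX_xv, zero_add] at this

lemma δ_mem {c d : ℕ} {Q : R6} (hQ : Q ∈ SD c d) : δ Q ∈ SD (c + 1) (d + 1) := by
  rw [δ_apply]
  obtain ⟨hE, hX⟩ := hQ
  obtain ⟨sE, sX⟩ := s_mem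
  exact ⟨by have := sE.mul hE; rwa [add_comm] at this,
         by have := sX.mul hX; rwa [add_comm] at this⟩

lemma ev_ne_xv (i j : Fin 3) : ev i ≠ xv j := by
  simp only [ev, xv, Fin.ne_iff_vne]
  omega

lemma xv_inj {i j : Fin 3} (h : xv i = xv j) : i = j := by
  simp only [xv, Fin.mk.injEq] at h
  exact Fin.ext (by omega)

lemma ev_inj {i j : Fin 3} (h : ev i = ev j) : i = j := by
  simp only [ev, Fin.mk.injEq] at h
  exact Fin.ext h

lemma eulerE {c : ℕ} {P : R6} (hP : IsWeightedHomogeneous wE P c) :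
    ∑ i : Fin 3, (X (ev i) : R6) * pderiv (ev i) P = c • P := by
  have h := euler wE c P hP
  rw [Fin.sum_univ_six] at h
  rw [Fin.sum_univ_three]
  have w0 : wE 0 = 1 := rfl
  have w1 : wE 1 = 1 := rfl
  have w2 : wE 2 = 1 := rfl
  have w3 : wE 3 = 0 := rfl
  have w4 : wE 4 = 0 := rfl
  have w5 : wE 5 = 0 := rfl
  rw [w0, w1, w2, w3, w4, w5, one_smul, one_smul, one_smul, zero_smul, zero_smul, zero_smul,
    add_zero, add_zero, add_zero] at h
  have e0 : ev 0 = (0 : Fin 6) := rfl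
  have e1 : ev 1 = (1 : Fin 6) := rfl
  have e2 : ev 2 = (2 : Fin 6) := rfl
  rw [e0, e1, e2]
  exact h

lemma eulerX {d : ℕ} {P : R6} (hP : IsWeightedHomogeneous wX P d) :
    ∑ i : Fin 3, (X (xv i) : R6) * pderiv (xv i) P = d • P := by
  have h := euler wX d P hP
  rw [Fin.sum_univ_six] at h
  rw [Fin.sum_univ_three]
  have w0 : wX 0 = 0 := rfl
  have w1 : wX 1 = 0 := rfl
  have w2 : wX 2 = 0 := rfl
  have w3 : wX 3 = 1 := rfl
  have w4 : wX 4 = 1 := rfl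
  have w5 : wX 5 = 1 := rfl
  rw [w0, w1, w2, w3, w4, w5, one_smul, one_smul, one_smul, zero_smul, zero_smul, zero_smul,
    zero_add, zero_add, zero_add] at h
  have e0 : xv 0 = (3 : Fin 6) := rfl
  have e1 : xv 1 = (4 : Fin 6) := rfl
  have e2 : xv 2 = (5 : Fin 6) := rfl
  rw [e0, e1, e2]
  exact h

def sP : R6 := ∑ i : Fin 3, (X (ev i) : R6) * X (xv i)

lemma pderiv_xv_sP (i : Fin 3) : pderiv (xv i) sP = X (ev i) := by
  unfold sP
  rw [map_sum]
  rw [Finset.sum_eq_single i]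
  · rw [pderiv_mul, pderiv_X_of_ne (ev_ne_xv i i), pderiv_X_self, zero_mul, mul_one, zero_add]
  · intro j _ hji
    rw [pderiv_mul, pderiv_X_of_ne (ev_ne_xv j i), pderiv_X_of_ne (fun h => hji (xv_inj h)),
      zero_mul, mul_zero, add_zero]
  · intro h; exact absurd (Finset.mem_univ i) h

lemma pderiv_ev_sP (i : Fin 3) : pderiv (ev i) sP = X (xv i) := by
  unfold sP
  rw [map_sum]
  rw [Finset.sum_eq_single i]
  · rw [pderiv_mul, pderiv_X_self, pderiv_X_of_ne (Ne.symm (ev_ne_xv i i)), one_mul, mul_zero,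
      add_zero]
  · intro j _ hji
    rw [pderiv_mul, pderiv_X_of_ne (fun h => hji (ev_inj h)),
      pderiv_X_of_ne (Ne.symm (ev_ne_xv i j)), zero_mul, mul_zero, add_zero]
  · intro h; exact absurd (Finset.mem_univ i) h

lemma comm1 {c d : ℕ} {Q : R6} (hQ : Q ∈ SD c d) :
    Δ (δ Q) = δ (Δ Q) + ((c : ℂ) + d + 3) • Q := by
  obtain ⟨hE, hX⟩ := hQ
  have key : ∀ i : Fin 3, pderiv (ev i) (pderiv (xv i) (sP * Q)) =
      Q + X (ev i) * pderiv (ev i) Q + X (xv i) * pderiv (xv i) Q +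
        sP * pderiv (ev i) (pderiv (xv i) Q) := by
    intro i
    rw [pderiv_mul, pderiv_xv_sP, map_add, pderiv_mul, pderiv_mul, pderiv_X_self,
      pderiv_ev_sP, one_mul]
    ring
  have hδ : ∀ W : R6, δ W = sP * W := fun W => δ_apply W
  rw [Δ_apply, hδ]
  simp only [key]
  rw [Finset.sum_add_distrib, Finset.sum_add_distrib, Finset.sum_add_distrib]
  rw [Finset.sum_const, Finset.card_univ, Fintype.card_fin]
  rw [eulerE hE, eulerX hX, ← Finset.mul_sum, ← Δ_apply, ← hδ]
  rw [add_comm]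
  congr 1
  rw [show ((c : ℂ) + d + 3) = ((c + d + 3 : ℕ) : ℂ) by push_cast; ring,
    Nat.cast_smul_eq_nsmul]
  rw [show c + d + 3 = 3 + c + d by ring]
  rw [add_nsmul, add_nsmul]

lemma Δpow_mem {c d : ℕ} {P : R6} (hP : P ∈ SD c d) (i : ℕ) :
    (Δ ^ i) P ∈ SD (c - i) (d - i) := by
  induction i with
  | zero => simpa using hP
  | succ k ih =>
    rw [pow_succ', Module.End.mul_apply]
    have := Δ_mem ih
    rwa [Nat.sub_sub, Nat.sub_sub] at this

lemma δpow_mem {c d : ℕ} {Q : R6} (hQ : Q ∈ SD c d) (i : ℕ) :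
    (δ ^ i) Q ∈ SD (c + i) (d + i) := by
  induction i with
  | zero => simpa using hQ
  | succ k ih =>
    rw [pow_succ', Module.End.mul_apply]
    have := δ_mem ih
    rwa [show c + k + 1 = c + (k + 1) by ring, show d + k + 1 = d + (k + 1) by ring] at this

lemma T_mem {c d : ℕ} {P : R6} (hP : P ∈ SD c d) : δ (Δ P) ∈ SD c d := by
  rcases Nat.eq_zero_or_pos c with h | hc
  · rw [Δ_zero hP (Or.inl h), map_zero]; exact (SD c d).zero_mem
  rcases Nat.eq_zero_or_pos d with h | hd
  · rw [Δ_zero hP (Or.inr h), map_zero]; exact (SD c d).zero_mem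
  have := δ_mem (Δ_mem hP)
  rwa [Nat.sub_add_cancel hc, Nat.sub_add_cancel hd] at this

lemma comm_pow (i : ℕ) : ∀ (c d : ℕ) (Q : R6), Q ∈ SD c d →
    Δ ((δ ^ i) Q) = (δ ^ i) (Δ Q) + ((i : ℂ) * ((c : ℂ) + d + i + 2)) • (δ ^ (i - 1)) Q := by
  induction i with
  | zero => intro c d Q hQ; simp
  | succ k ih =>
    intro c d Q hQ
    have h1 : (δ ^ (k + 1)) Q = δ ((δ ^ k) Q) := by rw [pow_succ', Module.End.mul_apply]
    have h2 : (δ ^ (k + 1)) (Δ Q) = δ ((δ ^ k) (Δ Q)) := by rw [pow_succ', Module.End.mul_apply]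
    rw [h1, comm1 (δpow_mem hQ k), ih c d Q hQ, map_add, map_smul, ← h2,
      show k + 1 - 1 = k from rfl, add_assoc]
    congr 1
    cases k with
    | zero =>
      push_cast
      rw [zero_mul, zero_smul, zero_add]
      congr 1
      ring
    | succ k' =>
      have h3 : δ ((δ ^ (k' + 1 - 1)) Q) = (δ ^ (k' + 1)) Q := by
        rw [show k' + 1 - 1 = k' from rfl, pow_succ', Module.End.mul_apply]
      rw [h3, ← add_smul]
      congr 1
      push_cast
      ring

lemma Δpow_zero_top {c d : ℕ} {P : R6} (hP : P ∈ SD c d) :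
    (Δ ^ (min c d + 1)) P = 0 := by
  rw [pow_succ', Module.End.mul_apply]
  apply Δ_zero (Δpow_mem hP (min c d))
  omega

/-- the commutator coefficient -/
def gam (c d i : ℕ) : ℕ := i * ((c - i) + (d - i) + i + 2)

lemma TE {c d : ℕ} {P : R6} (hP : P ∈ SD c d) (i : ℕ) :
    δ (Δ ((δ ^ i) ((Δ ^ i) P))) =
      (δ ^ (i + 1)) ((Δ ^ (i + 1)) P) + ((gam c d i : ℚ) : ℂ) • (δ ^ i) ((Δ ^ i) P) := by
  have hQ := Δpow_mem hP i
  rw [comm_pow i (c - i) (d - i) _ hQ, map_add, map_smul]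
  have h1 : δ ((δ ^ i) (Δ ((Δ ^ i) P))) = (δ ^ (i + 1)) ((Δ ^ (i + 1)) P) := by
    rw [show Δ ((Δ ^ i) P) = (Δ ^ (i + 1)) P by rw [pow_succ', Module.End.mul_apply],
      show δ ((δ ^ i) ((Δ ^ (i+1)) P)) = (δ ^ (i+1)) ((Δ ^ (i+1)) P) by
        rw [pow_succ' δ, Module.End.mul_apply]]
  rw [h1]
  congr 1
  cases i with
  | zero =>
    norm_num [gam]
  | succ i' =>
    have h2 : δ ((δ ^ (i' + 1 - 1)) ((Δ ^ (i' + 1)) P)) = (δ ^ (i' + 1)) ((Δ ^ (i' + 1)) P) := by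
      rw [show i' + 1 - 1 = i' from rfl, pow_succ' δ, Module.End.mul_apply]
    rw [h2]
    congr 1
    rw [gam]
    push_cast
    ring

/-- the eigenvalues -/
def lam (c d k : ℕ) : ℚ := k * ((c : ℚ) + d + 2 - k)

def Topr : Module.End ℂ R6 := δ * Δ

def Aop (c d : ℕ) : ℕ → Module.End ℂ R6
  | 0 => 1
  | k + 1 => (Topr - ((lam c d k : ℂ)) • 1) * Aop c d k

def Bop (c d : ℕ) : ℕ → Module.End ℂ R6
  | 0 => 1
  | k + 1 => (Topr - ((lam c d (k + 1) : ℂ)) • 1) * Bop c d k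

lemma Aop_succ (c d k : ℕ) :
    Aop c d (k + 1) = (Topr - ((lam c d k : ℂ)) • (1 : Module.End ℂ R6)) * Aop c d k := rfl

lemma Bop_succ (c d k : ℕ) :
    Bop c d (k + 1) = (Topr - ((lam c d (k + 1) : ℂ)) • (1 : Module.End ℂ R6)) * Bop c d k := rfl

lemma AB (c d k : ℕ) : Aop c d (k + 1) = Bop c d k * Topr := by
  induction k with
  | zero =>
    rw [Aop_succ, show Aop c d 0 = 1 from rfl, show Bop c d 0 = 1 from rfl]
    rw [show lam c d 0 = 0 by simp [lam]]
    push_cast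
    rw [zero_smul, sub_zero, mul_one, one_mul]
  | succ k ih =>
    rw [show Aop c d (k + 1 + 1) =
      (Topr - ((lam c d (k + 1) : ℂ)) • (1 : Module.End ℂ R6)) * Aop c d (k + 1) from rfl]
    rw [ih, Bop_succ, mul_assoc]

lemma factor_apply (μ : ℂ) (W : R6) : ((Topr - μ • 1) : Module.End ℂ R6) W = δ (Δ W) - μ • W := by
  rw [LinearMap.sub_apply, LinearMap.smul_apply, Module.End.one_apply]
  rfl

lemma Aop_mem {c d : ℕ} {P : R6} (hP : P ∈ SD c d) (k : ℕ) : Aop c d k P ∈ SD c d := by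
  induction k with
  | zero => simpa [Aop] using hP
  | succ k ih =>
    rw [Aop_succ, Module.End.mul_apply, factor_apply]
    exact Submodule.sub_mem _ (T_mem ih) (Submodule.smul_mem _ _ ih)

lemma Bop_mem {c d : ℕ} {P : R6} (hP : P ∈ SD c d) (k : ℕ) : Bop c d k P ∈ SD c d := by
  induction k with
  | zero => simpa [Bop] using hP
  | succ k ih =>
    rw [Bop_succ, Module.End.mul_apply, factor_apply]
    exact Submodule.sub_mem _ (T_mem ih) (Submodule.smul_mem _ _ ih)

lemma shift (c' d' k : ℕ) (Q : R6) (hQ : Q ∈ SD c' d') :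
    Bop (c' + 1) (d' + 1) k (δ Q) = δ (Aop c' d' k Q) := by
  induction k with
  | zero => simp [Bop, Aop]
  | succ k ih =>
    rw [Bop_succ, Module.End.mul_apply, ih, factor_apply]
    have hQ1 : Aop c' d' k Q ∈ SD c' d' := Aop_mem hQ k
    rw [comm1 hQ1]
    rw [Aop_succ, Module.End.mul_apply, factor_apply, map_sub, map_smul, map_add, map_smul]
    rw [add_sub_assoc, ← sub_smul, sub_eq_add_neg (δ (δ (Δ ((Aop c' d' k) Q)))), ← neg_smul]
    congr 1
    simp only [lam]
    push_cast
    ring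

lemma key1 : ∀ (n c d : ℕ), min c d = n → ∀ P ∈ SD c d, Aop c d (n + 1) P = 0 := by
  intro n
  induction n with
  | zero =>
    intro c d hmin P hP
    rw [AB, Module.End.mul_apply]
    have : Topr P = δ (Δ P) := rfl
    rw [this, Δ_zero hP (by omega), map_zero, map_zero]
  | succ n ih =>
    intro c d hmin P hP
    obtain ⟨c', rfl⟩ : ∃ c', c = c' + 1 := ⟨c - 1, by omega⟩
    obtain ⟨d', rfl⟩ : ∃ d', d = d' + 1 := ⟨d - 1, by omega⟩
    rw [AB, Module.End.mul_apply]
    have h1 : Topr P = δ (Δ P) := rfl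
    have h2 : Δ P ∈ SD c' d' := by simpa using Δ_mem hP
    rw [h1, shift c' d' (n + 1) _ h2, ih c' d' (by omega) _ h2, map_zero]

/-- product of negated eigenvalues -/
def bco (c d k : ℕ) : ℚ := ∏ j ∈ Finset.range k, (- lam c d (j + 1))

lemma eigen {c d : ℕ} {v : R6} (hv : Δ v = 0) (k : ℕ) :
    Bop c d k v = ((bco c d k : ℚ) : ℂ) • v := by
  induction k with
  | zero => simp [Bop, bco]
  | succ k ih =>
    rw [Bop_succ, Module.End.mul_apply, ih, map_smul, factor_apply, hv, map_zero, zero_sub,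
      ← neg_smul, smul_smul]
    congr 1
    rw [bco, bco, Finset.prod_range_succ]
    push_cast
    ring

lemma bco_ne (c d : ℕ) : bco c d (min c d) ≠ 0 := by
  rw [bco]
  apply Finset.prod_ne_zero_iff.mpr
  intro j hj
  rw [Finset.mem_range] at hj
  have hc : (j : ℚ) + 1 ≤ (c : ℚ) := by
    have : j + 1 ≤ c := by omega
    exact_mod_cast this
  simp only [lam, neg_ne_zero]
  apply mul_ne_zero
  · positivity
  · have hd : (0 : ℚ) ≤ (d : ℚ) := by positivity
    push_cast
    intro h
    nlinarith

lemma sum_shift (k : ℕ) (g : ℕ → ℚ) (F : ℕ → R6) :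
    ∑ i ∈ Finset.range (k + 1), ((g i : ℚ) : ℂ) • F (i + 1) =
      ∑ i ∈ Finset.range (k + 2), (((if i = 0 then (0 : ℚ) else g (i - 1)) : ℚ) : ℂ) • F i := by
  rw [Finset.sum_range_succ' (fun i => (((if i = 0 then (0 : ℚ) else g (i - 1)) : ℚ) : ℂ) • F i)
    (k + 1)]
  simp

lemma sum_pad (k : ℕ) (g : ℕ → ℚ) (F : ℕ → R6) :
    ∑ i ∈ Finset.range (k + 1), ((g i : ℚ) : ℂ) • F i =
      ∑ i ∈ Finset.range (k + 2), (((if i ≤ k then g i else (0 : ℚ)) : ℚ) : ℂ) • F i := by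
  conv_rhs => rw [Finset.sum_range_succ]
  rw [if_neg (by omega : ¬ (k + 1 ≤ k)), Rat.cast_zero, zero_smul, add_zero]
  refine Finset.sum_congr rfl fun i hi => ?_
  rw [Finset.mem_range] at hi
  rw [if_pos (by omega : i ≤ k)]

lemma expand (c d k : ℕ) : ∃ β : ℕ → ℚ, ∀ P ∈ SD c d,
    Bop c d k P = ∑ i ∈ Finset.range (k + 1), ((β i : ℚ) : ℂ) • (δ ^ i) ((Δ ^ i) P) := by
  induction k with
  | zero =>
    refine ⟨fun _ => 1, fun P hP => ?_⟩
    simp [Bop]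
  | succ k ih =>
    obtain ⟨β, hβ⟩ := ih
    refine ⟨fun i => (if i = 0 then 0 else β (i - 1)) +
      (if i ≤ k then β i * (gam c d i : ℚ) - lam c d (k + 1) * β i else 0), fun P hP => ?_⟩
    set F : ℕ → R6 := fun i => (δ ^ i) ((Δ ^ i) P) with hF
    rw [Bop_succ, Module.End.mul_apply, hβ P hP, factor_apply, map_sum, map_sum]
    have hTE : ∀ i : ℕ, δ (Δ (((β i : ℚ) : ℂ) • F i)) =
        ((β i : ℚ) : ℂ) • F (i + 1) + (((β i * (gam c d i : ℚ)) : ℚ) : ℂ) • F i := by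
      intro i
      rw [map_smul, map_smul, hF]
      simp only []
      rw [TE hP i, smul_add, smul_smul]
      push_cast
      ring_nf
    simp only [show ∀ i, (δ ^ i) ((Δ ^ i) P) = F i from fun i => rfl, hTE]
    rw [Finset.sum_add_distrib, Finset.smul_sum]
    have hlam : ∀ i : ℕ, (lam c d (k + 1) : ℂ) • (((β i : ℚ) : ℂ) • F i) =
        (((lam c d (k + 1) * β i : ℚ)) : ℂ) • F i := by
      intro i
      rw [smul_smul]
      push_cast
      ring_nf
    simp only [hlam]
    rw [sum_shift k β F, sum_pad k (fun i => β i * (gam c d i : ℚ)) F,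
      sum_pad k (fun i => lam c d (k + 1) * β i) F]
    rw [add_sub_assoc, ← Finset.sum_sub_distrib, ← Finset.sum_add_distrib]
    refine Finset.sum_congr rfl fun i _ => ?_
    rw [← sub_smul, ← add_smul]
    congr 1
    push_cast
    split_ifs <;> push_cast <;> ring


/-- The projection `π_{a,b} : S^aD^b → S^aD^b` with image `V(a,b)` and kernel
`δ(S^{a-1}D^{b-1})` is a polynomial expression `Σⱼ μⱼ δ^j Δ^j` with rational coefficients:
whenever `P ∈ S^aD^b` is decomposed as `P = v + δ(w)` with `v ∈ V(a,b)` and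
`w ∈ S^{a-1}D^{b-1}`, the `V(a,b)`-component `v = π_{a,b}(P)` equals `Σⱼ μⱼ δ^j (Δ^j P)`. -/
theorem stmt6 (a b : ℕ) :
    ∃ (N : ℕ) (μ : ℕ → ℚ), ∀ P ∈ SD a b, ∀ v w : R6,
      v ∈ V a b → w ∈ SDsub a b → P = v + δ w →
      v = ∑ j ∈ Finset.range (N + 1), (μ j : ℂ) • (δ ^ j) ((Δ ^ j) P) := by
  set m := min a b with hm
  obtain ⟨β, hβ⟩ := expand a b m
  refine ⟨m, fun i => (bco a b m)⁻¹ * β i, ?_⟩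
  intro P hP v w hv hw hPvw
  have hκ : bco a b m ≠ 0 := bco_ne a b
  have hκC : ((bco a b m : ℚ) : ℂ) ≠ 0 := by
    simpa using hκ
  have hΔv : Δ v = 0 := LinearMap.mem_ker.mp hv.1
  have hBv : Bop a b m v = ((bco a b m : ℚ) : ℂ) • v := eigen hΔv m
  have hBδw : Bop a b m (δ w) = 0 := by
    by_cases h : a = 0 ∨ b = 0
    · have hw0 : w = 0 := by
        rw [SDsub, if_pos h] at hw
        simpa using hw
      rw [hw0, map_zero, map_zero]
    · push_neg at h
      obtain ⟨a', rfl⟩ : ∃ a', a = a' + 1 := ⟨a - 1, by omega⟩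
      obtain ⟨b', rfl⟩ : ∃ b', b = b' + 1 := ⟨b - 1, by omega⟩
      have hw' : w ∈ SD a' b' := by
        rw [SDsub, if_neg (by omega)] at hw
        simpa using hw
      have hmm : m = min a' b' + 1 := by omega
      rw [hmm, shift a' b' _ w hw', key1 (min a' b') a' b' rfl w hw', map_zero]
  have hBP : Bop a b m P = ((bco a b m : ℚ) : ℂ) • v := by
    rw [hPvw, map_add, hBv, hBδw, add_zero]
  have hexp := hβ P hP
  rw [hBP] at hexp
  have h2 : ∑ j ∈ Finset.range (m + 1), (((bco a b m)⁻¹ * β j : ℚ) : ℂ) • (δ ^ j) ((Δ ^ j) P) =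
      (((bco a b m : ℚ) : ℂ))⁻¹ • ∑ j ∈ Finset.range (m + 1),
        ((β j : ℚ) : ℂ) • (δ ^ j) ((Δ ^ j) P) := by
    rw [Finset.smul_sum]
    refine Finset.sum_congr rfl fun j _ => ?_
    rw [smul_smul]
    congr 1
    push_cast
    ring
  rw [h2, ← hexp, inv_smul_smul₀ hκC]
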